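/- Fix a term order $\prec$ on monomials of $\mathbb{F}[x_1,\dots,x_n]$ (characteristic-zero field) and let $I$ be a homogeneous ideal with inverse system $I^\perp$. For nonzero $f$, let $\mathrm{fin}_\prec(f)$ denote the $\prec$-smallest monomial appearing in $f$ with nonzero coefficient. Then the set of standard monomials of $I$ with respect to $\prec$ (monomials not in the initial ideal $\mathrm{in}_\prec(I)$) equals $\{\mathrm{fin}_\prec(f) : f \in I^\perp, f \neq 0\}$. -/

import Mathlib

open MvPolynomial

/-- The differential operator `f(∂/∂x₁, …, ∂/∂xₙ)` applied to `g`: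
the `⊙`-action `f ⊙ g`. -/
noncomputable def diffOp {n : ℕ} {F : Type*} [Field F]
    (f g : MvPolynomial (Fin n) F) : MvPolynomial (Fin n) F :=
  (AddMonoidAlgebra.coeff f).sum fun m c =>
    c • (List.finRange n).foldl (fun acc i => (fun h => pderiv i h)^[m i] acc) g

/-- `m` is the `≺`-largest monomial appearing in `f` with nonzero coefficient
(`r` is the strict term order `≺` on exponent vectors). -/
def IsLeadMonomial {n : ℕ} {F : Type*} [Field F]
    (r : (Fin n →₀ ℕ) → (Fin n →₀ ℕ) → Prop)
    (f : MvPolynomial (Fin n) F) (m : Fin n →₀ ℕ) : Prop :=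
  m ∈ f.support ∧ ∀ m' ∈ f.support, m' ≠ m → r m' m

/-- `m` is the `≺`-smallest monomial appearing in `f` with nonzero
coefficient. -/
def IsFinMonomial {n : ℕ} {F : Type*} [Field F]
    (r : (Fin n →₀ ℕ) → (Fin n →₀ ℕ) → Prop)
    (f : MvPolynomial (Fin n) F) (m : Fin n →₀ ℕ) : Prop :=
  m ∈ f.support ∧ ∀ m' ∈ f.support, m' ≠ m → r m m'

section Aux
open Finsupp

variable {n : ℕ} {F : Type*} [Field F]

theorem coeff_pderiv (i : Fin n) (f : MvPolynomial (Fin n) F) (b : Fin n →₀ ℕ) :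
    coeff b (pderiv i f) = ((b i + 1 : ℕ) : F) * coeff (b + Finsupp.single i 1) f := by
  classical
  conv_lhs => rw [f.as_sum]
  rw [map_sum, coeff_sum]
  simp_rw [pderiv_monomial, coeff_monomial]
  rw [Finset.sum_eq_single (b + Finsupp.single i 1)]
  · rw [if_pos (by simp), Finsupp.add_apply, Finsupp.single_apply, if_pos rfl]
    push_cast; ring
  · intro v hv hne
    split_ifs with h
    · rcases Nat.eq_zero_or_pos (v i) with h0 | hpos
      · simp [h0]
      · exfalso; apply hne
        ext j
        have := congrFun (congrArg DFunLike.coe h) j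
        simp only [Finsupp.tsub_apply, Finsupp.add_apply, Finsupp.single_apply] at this ⊢
        by_cases hj : i = j
        · subst hj; simp at this ⊢; omega
        · simp only [if_neg hj] at this ⊢; omega
    · rfl
  · intro h
    rw [MvPolynomial.notMem_support_iff] at h
    rw [h, if_pos (by simp)]
    simp [h]

theorem coeff_pderiv_iterate (i : Fin n) (k : ℕ) (f : MvPolynomial (Fin n) F)
    (b : Fin n →₀ ℕ) :
    coeff b ((fun h => pderiv i h)^[k] f) =
      ((∏ t ∈ Finset.range k, (b i + t + 1) : ℕ) : F) * coeff (b + Finsupp.single i k) f := by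
  induction k generalizing f with
  | zero => simp
  | succ k ih =>
    rw [Function.iterate_succ_apply, ih, _root_.coeff_pderiv]
    have h1 : (b + Finsupp.single i k) i = b i + k := by
      simp [Finsupp.add_apply, Finsupp.single_apply]
    have h2 : b + Finsupp.single i k + Finsupp.single i 1 = b + Finsupp.single i (k+1) := by
      rw [add_assoc, ← Finsupp.single_add]
    rw [h1, h2, Finset.prod_range_succ]
    push_cast
    ring

theorem coeff_foldl (a : Fin n →₀ ℕ) (l : List (Fin n)) (hl : l.Nodup)
    (g : MvPolynomial (Fin n) F) (b : Fin n →₀ ℕ) :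
    coeff b (l.foldl (fun acc i => (fun h => pderiv i h)^[a i] acc) g) =
      ((∏ i ∈ l.toFinset, ∏ t ∈ Finset.range (a i), (b i + t + 1) : ℕ) : F) *
        coeff (b + ∑ i ∈ l.toFinset, Finsupp.single i (a i)) g := by
  induction l generalizing g with
  | nil => simp
  | cons i0 l ih =>
    rw [List.nodup_cons] at hl
    rw [List.foldl_cons, ih hl.2, coeff_pderiv_iterate]
    have hne : i0 ∉ l.toFinset := by simpa using hl.1
    have hy : (b + ∑ i ∈ l.toFinset, Finsupp.single i (a i)) i0 = b i0 := by
      rw [Finsupp.add_apply, Finsupp.finset_sum_apply]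
      rw [Finset.sum_eq_zero, add_zero]
      intro j hj
      exact Finsupp.single_eq_of_ne (fun h => hne (h ▸ hj))
    have harg : b + (∑ i ∈ l.toFinset, Finsupp.single i (a i)) + Finsupp.single i0 (a i0)
        = b + (Finsupp.single i0 (a i0) + ∑ i ∈ l.toFinset, Finsupp.single i (a i)) := by
      rw [add_assoc, add_comm (∑ i ∈ l.toFinset, Finsupp.single i (a i))]
    rw [hy, harg, List.toFinset_cons, Finset.prod_insert hne, Finset.sum_insert hne]
    push_cast
    ring

def ascFn (b a : Fin n →₀ ℕ) : ℕ := ∏ i, ∏ t ∈ Finset.range (a i), (b i + t + 1)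

def factF (a : Fin n →₀ ℕ) : ℕ := ∏ i, (a i).factorial

theorem ascFn_pos (b a : Fin n →₀ ℕ) : 0 < ascFn b a := by
  refine Finset.prod_pos fun i _ => Finset.prod_pos fun t _ => by omega

theorem factF_pos (a : Fin n →₀ ℕ) : 0 < factF a :=
  Finset.prod_pos fun i _ => Nat.factorial_pos _

theorem ascFn_mul_factF (b a : Fin n →₀ ℕ) : ascFn b a * factF b = factF (b + a) := by
  rw [ascFn, factF, factF, ← Finset.prod_mul_distrib]
  refine Finset.prod_congr rfl fun i _ => ?_
  rw [Finsupp.add_apply]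
  induction a i with
  | zero => simp
  | succ k ih =>
    rw [Finset.prod_range_succ, mul_right_comm, ih]
    rw [← Nat.add_assoc, Nat.factorial_succ]
    ring

theorem coeff_diffOp (g f : MvPolynomial (Fin n) F) (b : Fin n →₀ ℕ) :
    coeff b (diffOp g f) =
      ∑ a ∈ g.support, coeff a g * ((ascFn b a : ℕ) : F) * coeff (b + a) f := by
  rw [diffOp, Finsupp.sum, coeff_sum]
  refine Finset.sum_congr rfl fun a ha => ?_
  rw [coeff_smul, coeff_foldl a _ (List.nodup_finRange n),
    List.toFinset_finRange, Finsupp.univ_sum_single]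
  rw [show ((∏ i, ∏ t ∈ Finset.range (a i), (b i + t + 1) : ℕ) : F) = ((ascFn b a : ℕ) : F) from rfl]
  rw [smul_eq_mul, ← mul_assoc]
  rfl

theorem notMem_initial_of_fin [CharZero F]
    (r : (Fin n →₀ ℕ) → (Fin n →₀ ℕ) → Prop)
    (hirr : ∀ a, ¬ r a a)
    (htrans : ∀ a b c, r a b → r b c → r a c)
    (hadd : ∀ a b c : Fin n →₀ ℕ, r a b → r (a + c) (b + c))
    (I : Ideal (MvPolynomial (Fin n) F))
    (m : Fin n →₀ ℕ) (f : MvPolynomial (Fin n) F)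
    (hperp : ∀ g ∈ I, diffOp g f = 0) (hf0 : f ≠ 0) (hfin : IsFinMonomial r f m) :
    (MvPolynomial.monomial m 1 : MvPolynomial (Fin n) F) ∉
      Ideal.span {g : MvPolynomial (Fin n) F |
        ∃ f ∈ I, f ≠ 0 ∧ ∃ m', IsLeadMonomial r f m' ∧
          g = MvPolynomial.monomial m' 1} := by
  classical
  intro hmem
  have himg : {g : MvPolynomial (Fin n) F |
      ∃ f ∈ I, f ≠ 0 ∧ ∃ m', IsLeadMonomial r f m' ∧ g = MvPolynomial.monomial m' 1}
      = (fun s => monomial s (1 : F)) '' {m' | ∃ h ∈ I, h ≠ 0 ∧ IsLeadMonomial r h m'} := by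
    ext p
    constructor
    · rintro ⟨q, hqI, hq0, m', hlead, rfl⟩
      exact ⟨m', ⟨q, hqI, hq0, hlead⟩, rfl⟩
    · rintro ⟨m', ⟨q, hqI, hq0, hlead⟩, rfl⟩
      exact ⟨q, hqI, hq0, m', hlead, rfl⟩
  rw [himg, mem_ideal_span_monomial_image] at hmem
  obtain ⟨m', ⟨g, hgI, hg0, hlead⟩, hle⟩ :=
    hmem m (by rw [support_monomial, if_neg (one_ne_zero)]; exact Finset.mem_singleton_self m)
  set c := m - m' with hc
  have hm : m' + c = m := by
    rw [hc, add_comm]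
    exact tsub_add_cancel_of_le hle
  set h := monomial c (1 : F) * g with hh
  have hhI : h ∈ I := Ideal.mul_mem_left _ _ hgI
  have hcoeffh : ∀ e, coeff e h = if c ≤ e then coeff (e - c) g else 0 := by
    intro e
    rw [hh, coeff_monomial_mul']
    split_ifs <;> simp
  have hcm : coeff m h = coeff m' g := by
    rw [hcoeffh, if_pos (by rw [← hm]; exact le_add_self), ← hm, add_tsub_cancel_right]
  have hmsupp : m ∈ h.support := by
    rw [MvPolynomial.mem_support_iff, hcm]
    exact MvPolynomial.mem_support_iff.mp hlead.1
  have hhlead : ∀ e ∈ h.support, e ≠ m → r e m := by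
    intro e he hne
    rw [MvPolynomial.mem_support_iff, hcoeffh] at he
    by_cases hce : c ≤ e
    · rw [if_pos hce] at he
      have ha : e - c ∈ g.support := MvPolynomial.mem_support_iff.mpr he
      have hea : e - c + c = e := tsub_add_cancel_of_le hce
      have hne' : e - c ≠ m' := by
        intro hEq
        apply hne
        rw [← hea, hEq, hm]
      have := hadd _ _ c (hlead.2 _ ha hne')
      rwa [hea, hm] at this
    · rw [if_neg hce] at he
      exact absurd rfl he
  have hzero : coeff 0 (diffOp h f) = 0 := by rw [hperp h hhI, coeff_zero]
  rw [coeff_diffOp] at hzero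
  rw [Finset.sum_eq_single_of_mem m hmsupp] at hzero
  · rw [zero_add] at hzero
    have h1 : coeff m h ≠ 0 := MvPolynomial.mem_support_iff.mp hmsupp
    have h3 : coeff m f ≠ 0 := MvPolynomial.mem_support_iff.mp hfin.1
    exact h1 (by
      rcases mul_eq_zero.mp hzero with h' | h'
      · rcases mul_eq_zero.mp h' with h'' | h''
        · exact h''
        · exact absurd h'' (Nat.cast_ne_zero.mpr (ascFn_pos 0 m).ne')
      · exact absurd h' h3)
  · intro e he hne
    by_cases hfe : coeff (0 + e) f = 0
    · rw [hfe, mul_zero]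
    · exfalso
      rw [zero_add] at hfe
      have hesupp : e ∈ f.support := MvPolynomial.mem_support_iff.mpr hfe
      exact hirr m (htrans m e m (hfin.2 e hesupp hne) (hhlead e he hne))

theorem degree_add' (a b : Fin n →₀ ℕ) : (a + b).degree = a.degree + b.degree := by
  simp [Finsupp.degree_eq_weight_one, map_add]

theorem exists_fin_of_standard [CharZero F]
    (r : (Fin n →₀ ℕ) → (Fin n →₀ ℕ) → Prop)
    (hirr : ∀ a, ¬ r a a)
    (htotal : ∀ a b, a ≠ b → r a b ∨ r b a)
    (I : Ideal (MvPolynomial (Fin n) F))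
    (hhom : ∀ f ∈ I, ∀ i : ℕ, MvPolynomial.homogeneousComponent i f ∈ I)
    (m : Fin n →₀ ℕ)
    (hstd : (MvPolynomial.monomial m 1 : MvPolynomial (Fin n) F) ∉
      Ideal.span {g : MvPolynomial (Fin n) F |
        ∃ f ∈ I, f ≠ 0 ∧ ∃ m', IsLeadMonomial r f m' ∧
          g = MvPolynomial.monomial m' 1}) :
    ∃ f : MvPolynomial (Fin n) F,
      (∀ g ∈ I, diffOp g f = 0) ∧ f ≠ 0 ∧ IsFinMonomial r f m := by
  classical
  set d := m.degree with hd
  have hmemD : ∀ a : Fin n →₀ ℕ,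
      a ∈ Finset.finsuppAntidiag (Finset.univ : Finset (Fin n)) d ↔ a.degree = d := by
    intro a
    rw [Finset.mem_finsuppAntidiag]
    constructor
    · rintro ⟨h1, -⟩
      rw [← h1, Finsupp.degree]
      exact Finset.sum_subset (Finset.subset_univ _)
        (fun x _ hx => Finsupp.notMem_support_iff.mp hx)
    · intro h
      exact ⟨by rw [← h, Finsupp.degree]; exact (Finset.sum_subset (Finset.subset_univ _)
        (fun x _ hx => Finsupp.notMem_support_iff.mp hx)).symm, Finset.subset_univ _⟩
  set Dfin := Finset.finsuppAntidiag (Finset.univ : Finset (Fin n)) d with hDF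
  set U : Submodule F (MvPolynomial (Fin n) F) :=
    Submodule.span F ({g | g ∈ I ∧ g.IsHomogeneous d} ∪
      ((fun a => monomial a (1 : F)) '' {a | a.degree = d ∧ r a m})) with hU
  have hmU : (monomial m (1 : F)) ∉ U := by
    intro hmem
    rw [hU, Submodule.span_union] at hmem
    obtain ⟨y, hy, z, hz, hsum⟩ := Submodule.mem_sup.mp hmem
    have hyI : y ∈ I := by
      have hle : Submodule.span F {g | g ∈ I ∧ g.IsHomogeneous d} ≤
          Submodule.restrictScalars F I :=
        Submodule.span_le.mpr (fun g hg => hg.1)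
      exact hle hy
    have hzsupp : ∀ e ∈ z.support, r e m := by
      refine Submodule.span_induction (p := fun x _ => ∀ e ∈ x.support, r e m)
        ?_ ?_ ?_ ?_ hz
      · rintro x ⟨a, ⟨-, ham⟩, rfl⟩ e he
        rw [support_monomial, if_neg one_ne_zero, Finset.mem_singleton] at he
        exact he ▸ ham
      · simp
      · intro x y hx hy ihx ihy e he
        rcases Finset.mem_union.mp (MvPolynomial.support_add he) with h | h
        · exact ihx e h
        · exact ihy e h
      · intro c x hx ih e he
        exact ih e (MvPolynomial.support_smul he)
    have hy' : y = monomial m 1 - z := eq_sub_of_add_eq hsum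
    have hcmz : coeff m z = 0 := by
      by_contra hc
      exact hirr m (hzsupp m (MvPolynomial.mem_support_iff.mpr hc))
    have hcm : coeff m y = 1 := by
      rw [hy', coeff_sub, coeff_monomial, if_pos rfl, hcmz, sub_zero]
    have hy0 : y ≠ 0 := fun h => by simp [h] at hcm
    have hlead : IsLeadMonomial r y m := by
      constructor
      · exact MvPolynomial.mem_support_iff.mpr (by rw [hcm]; exact one_ne_zero)
      · intro e he hne
        apply hzsupp
        rw [MvPolynomial.mem_support_iff] at he ⊢
        intro hez
        apply he
        rw [hy', coeff_sub, coeff_monomial, if_neg (fun h => hne h.symm), hez, sub_zero]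
    exact hstd (Ideal.subset_span ⟨y, hyI, hy0, m, hlead, rfl⟩)
  obtain ⟨φ, hφm, hφbot⟩ :=
    Submodule.exists_dual_map_eq_bot_of_notMem hmU inferInstance
  have hφ0 : ∀ u ∈ U, φ u = 0 := by
    intro u hu
    have h1 : φ u ∈ U.map φ := Submodule.mem_map_of_mem hu
    rw [hφbot] at h1
    exact (Submodule.mem_bot F).mp h1
  set f : MvPolynomial (Fin n) F :=
    ∑ a ∈ Dfin, monomial a (φ (monomial a 1) * ((factF a : ℕ) : F)⁻¹) with hf
  have hcoefff : ∀ e, coeff e f =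
      if e ∈ Dfin then φ (monomial e 1) * ((factF e : ℕ) : F)⁻¹ else 0 := by
    intro e
    rw [hf, coeff_sum]
    simp_rw [coeff_monomial]
    exact Finset.sum_ite_eq' Dfin e _
  have hfactne : ∀ a : Fin n →₀ ℕ, ((factF a : ℕ) : F) ≠ 0 :=
    fun a => Nat.cast_ne_zero.mpr (factF_pos a).ne'
  have hmD : m ∈ Dfin := (hmemD m).mpr rfl
  have hfm : coeff m f ≠ 0 := by
    rw [hcoefff, if_pos hmD]
    exact mul_ne_zero hφm (inv_ne_zero (hfactne m))
  refine ⟨f, ?_, fun h0 => hfm (by rw [h0, coeff_zero]), ?_⟩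
  · intro g hgI
    apply MvPolynomial.ext
    intro b
    rw [coeff_diffOp, coeff_zero]
    by_cases hb : b.degree ≤ d
    · set e := d - b.degree with he
      have hdeg : ∀ a : Fin n →₀ ℕ, ((b + a) ∈ Dfin) ↔ a.degree = e := by
        intro a
        rw [hmemD, degree_add']
        omega
      have key : ∀ a ∈ g.support, coeff a g * ((ascFn b a : ℕ) : F) * coeff (b + a) f
          = ((factF b : ℕ) : F)⁻¹ *
            (if a.degree = e then coeff a g * φ (monomial (b + a) 1) else 0) := by
        intro a _
        rw [hcoefff]
        by_cases hae : a.degree = e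
        · rw [if_pos ((hdeg a).mpr hae), if_pos hae]
          have hfe : ((ascFn b a : ℕ) : F) * ((factF (b + a) : ℕ) : F)⁻¹
              = ((factF b : ℕ) : F)⁻¹ := by
            rw [← ascFn_mul_factF b a]
            push_cast
            rw [mul_inv, ← mul_assoc,
              mul_inv_cancel₀ (Nat.cast_ne_zero.mpr (ascFn_pos b a).ne'), one_mul]
          rw [← hfe]
          ring
        · rw [if_neg (fun h => hae ((hdeg a).mp h)), if_neg hae, mul_zero, mul_zero]
      rw [Finset.sum_congr rfl key, ← Finset.mul_sum, ← Finset.sum_filter]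
      have hp : (monomial b (1 : F)) * homogeneousComponent e g
          = ∑ a ∈ g.support.filter (fun a => a.degree = e), monomial (b + a) (coeff a g) := by
        rw [homogeneousComponent_apply, Finset.mul_sum]
        exact Finset.sum_congr rfl fun a ha => by rw [monomial_mul, one_mul]
      have hφp : φ ((monomial b (1 : F)) * homogeneousComponent e g) = 0 := by
        apply hφ0
        apply Submodule.subset_span
        left
        refine ⟨Ideal.mul_mem_left _ _ (hhom g hgI e), ?_⟩
        have h1 : (monomial b (1 : F)).IsHomogeneous b.degree :=
          isHomogeneous_monomial _ rfl
        have h2 := homogeneousComponent_isHomogeneous e g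
        have h3 := h1.mul h2
        rwa [show b.degree + e = d by omega] at h3
      rw [hp, map_sum] at hφp
      have hsum0 : ∑ a ∈ g.support.filter (fun a => a.degree = e),
          coeff a g * φ (monomial (b + a) 1) = 0 := by
        rw [← hφp]
        refine Finset.sum_congr rfl fun a ha => ?_
        rw [show (monomial (b + a)) (coeff a g) = coeff a g • monomial (b + a) (1 : F) by
          rw [smul_monomial, smul_eq_mul, mul_one], map_smul, smul_eq_mul]
      rw [hsum0, mul_zero]
    · rw [Finset.sum_eq_zero]
      intro a _
      have hnotD : (b + a) ∉ Dfin := by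
        rw [hmemD, degree_add']
        omega
      rw [hcoefff, if_neg hnotD, mul_zero]
  · constructor
    · exact MvPolynomial.mem_support_iff.mpr hfm
    · intro e he hne
      have hce := MvPolynomial.mem_support_iff.mp he
      rw [hcoefff] at hce
      by_cases heD : e ∈ Dfin
      · rw [if_pos heD] at hce
        have hφe : φ (monomial e 1) ≠ 0 := fun h => hce (by rw [h, zero_mul])
        by_cases hre : r e m
        · exfalso
          apply hφe
          apply hφ0
          apply Submodule.subset_span
          right
          exact ⟨e, ⟨(hmemD e).mp heD, hre⟩, rfl⟩
        · rcases htotal m e (fun h => hne h.symm) with h | h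
          · exact h
          · exact absurd h hre
      · rw [if_neg heD] at hce
        exact absurd rfl hce

end Aux

/-- For a term order `≺` and a homogeneous ideal `I`, the standard monomials
of `I` (monomials not in the initial ideal `in_≺(I)`) are exactly the
`≺`-smallest monomials `fin_≺(f)` of the nonzero elements `f` of the inverse
system `I^⊥`. -/
theorem standardMonomials_eq_finMonomials_of_inverseSystem
    {n : ℕ} (F : Type*) [Field F] [CharZero F]
    (r : (Fin n →₀ ℕ) → (Fin n →₀ ℕ) → Prop)
    (hirr : ∀ a, ¬ r a a)
    (htrans : ∀ a b c, r a b → r b c → r a c)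
    (htotal : ∀ a b, a ≠ b → r a b ∨ r b a)
    (hbot : ∀ m : Fin n →₀ ℕ, m ≠ 0 → r 0 m)
    (hadd : ∀ a b c : Fin n →₀ ℕ, r a b → r (a + c) (b + c))
    (I : Ideal (MvPolynomial (Fin n) F))
    (hhom : ∀ f ∈ I, ∀ i : ℕ, MvPolynomial.homogeneousComponent i f ∈ I) :
    {m : Fin n →₀ ℕ |
        (MvPolynomial.monomial m 1 : MvPolynomial (Fin n) F) ∉
          Ideal.span {g : MvPolynomial (Fin n) F |
            ∃ f ∈ I, f ≠ 0 ∧ ∃ m', IsLeadMonomial r f m' ∧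
              g = MvPolynomial.monomial m' 1}} =
      {m : Fin n →₀ ℕ | ∃ f : MvPolynomial (Fin n) F,
        (∀ g ∈ I, diffOp g f = 0) ∧ f ≠ 0 ∧ IsFinMonomial r f m} := by
  ext m
  simp only [Set.mem_setOf_eq]
  constructor
  · intro hstd
    exact exists_fin_of_standard r hirr htotal I hhom m hstd
  · rintro ⟨f, hperp, hf0, hfin⟩
    exact notMem_initial_of_fin r hirr htrans hadd I m f hperp hf0 hfin
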